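/- A q-polynomial f(x) over F_{q^n} (of q-degree at most n-1) has kernel of F_q-dimension exactly n-1 if and only if there exist α, β ∈ F_{q^n}* such that f(x) = α·Tr_{q^n/q}(βx), where Tr_{q^n/q}(x) = x + x^q + ... + x^{q^{n-1}}. -/

import Mathlib

private lemma stmt7_pow_fixed {L : Type*} [Monoid L] {c : L} {q : ℕ} (h : c ^ q = c) :
    ∀ i, c ^ q ^ i = c := by
  intro i
  induction i with
  | zero => simp
  | succ i ih => rw [pow_succ, pow_mul, ih, h]

private lemma stmt7_hom_count {G : Type*} [AddGroup G] (f : G →+ G) :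
    Nat.card G = Nat.card f.range * Nat.card f.ker := by
  rw [AddSubgroup.card_eq_card_quotient_mul_card_addSubgroup f.ker]
  congr 1
  exact Nat.card_congr (QuotientAddGroup.quotientKerEquivRange f).toEquiv

private lemma stmt7_rootset_ncard_le {L : Type*} [Field L] (P : Polynomial L) (hP : P ≠ 0) :
    Set.ncard {x : L | P.eval x = 0} ≤ P.natDegree := by
  classical
  have h1 : {x : L | P.eval x = 0} = ↑P.roots.toFinset := by
    ext x; simp [Polynomial.mem_roots, hP, Polynomial.IsRoot]
  rw [h1, Set.ncard_coe_finset]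
  exact (Multiset.toFinset_card_le _).trans (Polynomial.card_roots' P)

open Polynomial in
private lemma stmt7_qpoly_coeff {q n : ℕ} (hq1 : 1 < q) {L : Type*} [Field L] (c : ℕ → L)
    {j : ℕ} (hj : j < n) :
    (∑ i ∈ Finset.range n, C (c i) * X ^ (q ^ i)).coeff (q ^ j) = c j := by
  classical
  rw [Polynomial.finset_sum_coeff, Finset.sum_eq_single j]
  · simp
  · intro i hi hij
    have : q ^ j ≠ q ^ i := fun hh => hij (Nat.pow_right_injective hq1 hh.symm)
    simp [Polynomial.coeff_X_pow, this]
  · intro hjj; exact absurd (Finset.mem_range.mpr hj) hjj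

open Polynomial in
private lemma stmt7_qpoly_natDegree_le {q n : ℕ} (hq1 : 1 < q) {L : Type*} [Field L] (c : ℕ → L) :
    (∑ i ∈ Finset.range n, C (c i) * X ^ (q ^ i)).natDegree ≤ q ^ (n - 1) := by
  apply Polynomial.natDegree_sum_le_of_forall_le
  intro i hi
  apply (Polynomial.natDegree_C_mul_le _ _).trans
  rw [Polynomial.natDegree_X_pow]
  exact Nat.pow_le_pow_right (le_of_lt hq1) (Nat.le_sub_one_of_lt (Finset.mem_range.mp hi))

open Polynomial in
private lemma stmt7_qpoly_coeff_zero {q n : ℕ} (hq1 : 1 < q) {L : Type*} [Field L] [Fintype L]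
    (hL : Fintype.card L = q ^ n) (hn : 0 < n) (c : ℕ → L)
    (h : ∀ x : L, ∑ i ∈ Finset.range n, c i * x ^ q ^ i = 0) :
    ∀ i < n, c i = 0 := by
  classical
  set P : L[X] := ∑ i ∈ Finset.range n, C (c i) * X ^ (q ^ i) with hP
  have heval : ∀ x : L, P.eval x = 0 := by
    intro x
    rw [hP]
    simpa [Polynomial.eval_finset_sum] using h x
  have hdeg : P.natDegree < Fintype.card L := by
    rw [hL]
    exact lt_of_le_of_lt (stmt7_qpoly_natDegree_le hq1 c)
      (Nat.pow_lt_pow_right hq1 (Nat.sub_lt hn one_pos))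
  have hP0 : P = 0 :=
    Polynomial.eq_zero_of_natDegree_lt_card_of_eval_eq_zero P Function.injective_id heval hdeg
  intro j hj
  have h2 := stmt7_qpoly_coeff (n := n) hq1 c hj
  rw [← hP, hP0] at h2
  simpa using h2.symm

/-- The q-polynomial as an additive monoid hom. -/
private def stmt7_qpolyHom (p e : ℕ) [Fact p.Prime] (n : ℕ) {L : Type*} [Field L] [CharP L p]
    (a : ℕ → L) : L →+ L where
  toFun x := ∑ i ∈ Finset.range n, a i * x ^ (p ^ e) ^ i
  map_zero' := by
    have hpe : p ^ e ≠ 0 := pow_ne_zero _ (Fact.out (p := p.Prime)).pos.ne'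
    show ∑ i ∈ Finset.range n, a i * (0 : L) ^ (p ^ e) ^ i = 0
    exact Finset.sum_eq_zero fun i _ => by rw [zero_pow (pow_ne_zero _ hpe), mul_zero]
  map_add' x y := by
    have key : ∀ i : ℕ, (x + y) ^ (p ^ e) ^ i = x ^ (p ^ e) ^ i + y ^ (p ^ e) ^ i := by
      intro i
      have hh : (p ^ e) ^ i = p ^ (e * i) := (pow_mul p e i).symm
      rw [hh, add_pow_char_pow]
    simp only [key, mul_add, Finset.sum_add_distrib]

@[simp] private lemma stmt7_qpolyHom_apply (p e : ℕ) [Fact p.Prime] (n : ℕ) {L : Type*}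
    [Field L] [CharP L p] (a : ℕ → L) (x : L) :
    stmt7_qpolyHom p e n a x = ∑ i ∈ Finset.range n, a i * x ^ (p ^ e) ^ i := rfl

private lemma stmt7_aux_count (p e n : ℕ) [hp : Fact p.Prime] (he : 0 < e) (hn : 0 < n)
    (L : Type*) [Field L] [Fintype L] [CharP L p] (hL : Fintype.card L = (p ^ e) ^ n) :
    Set.ncard {c : L | c ^ p ^ e = c} = p ^ e ∧
    Set.ncard {y : L | ∑ i ∈ Finset.range n, y ^ (p ^ e) ^ i = 0} = (p ^ e) ^ (n - 1) := by
  classical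
  set q := p ^ e with hqdef
  have hq1 : 1 < q := Nat.one_lt_pow he.ne' hp.out.one_lt
  have hq0 : 0 < q := lt_trans one_pos hq1
  have hfresh : ∀ x y : L, (x + y) ^ q = x ^ q + y ^ q := by
    intro x y; rw [hqdef]; exact add_pow_char_pow x y p e
  set φ : L →+ L := AddMonoidHom.mk' (fun x => x ^ q - x)
    (by intro x y; simp only [hfresh]; ring) with hφ
  set K : Set L := {c : L | c ^ q = c} with hK
  set T0 : Set L := {y : L | ∑ i ∈ Finset.range n, y ^ q ^ i = 0} with hT0
  have hker : (φ.ker : Set L) = K := by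
    ext x
    simp only [SetLike.mem_coe, AddMonoidHom.mem_ker, hφ, AddMonoidHom.mk'_apply, hK,
      Set.mem_setOf_eq, sub_eq_zero]
  have hKle : K.ncard ≤ q := by
    set P : Polynomial L := Polynomial.X ^ q - Polynomial.X with hP
    have hdeg : P.natDegree = q := by
      rw [hP]
      rw [Polynomial.natDegree_sub_eq_left_of_natDegree_lt] <;>
        simp [Polynomial.natDegree_X_pow, Polynomial.natDegree_X, hq1]
    have hP0 : P ≠ 0 := fun h => by simp [h] at hdeg; omega
    have : K = {x : L | P.eval x = 0} := by
      ext x; simp [hP, hK, sub_eq_zero, eq_comm]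
    rw [this]
    exact (stmt7_rootset_ncard_le P hP0).trans_eq hdeg
  have hT0le : T0.ncard ≤ q ^ (n - 1) := by
    set P : Polynomial L := ∑ i ∈ Finset.range n, Polynomial.C ((fun _ => (1:L)) i) *
      Polynomial.X ^ (q ^ i) with hP
    have hP0 : P ≠ 0 := by
      intro h
      have := stmt7_qpoly_coeff (n := n) hq1 (fun _ => (1:L)) (Nat.sub_lt hn one_pos)
      rw [← hP, h] at this
      simp at this
    have : T0 = {x : L | P.eval x = 0} := by
      ext x; simp [hP, hT0, Polynomial.eval_finset_sum]
    rw [this]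
    exact (stmt7_rootset_ncard_le P hP0).trans (stmt7_qpoly_natDegree_le hq1 _)
  have hrange : (φ.range : Set L) ⊆ T0 := by
    rintro y ⟨x, rfl⟩
    simp only [hT0, Set.mem_setOf_eq, hφ, AddMonoidHom.mk'_apply]
    have step : ∀ i : ℕ, (x ^ q - x) ^ q ^ i = x ^ q ^ (i + 1) - x ^ q ^ i := by
      intro i
      have h1 : (x ^ q - x) ^ q ^ i = (x ^ q) ^ q ^ i - x ^ q ^ i := by
        have hpow : q ^ i = p ^ (e * i) := by rw [hqdef, ← pow_mul]
        rw [hpow]; exact sub_pow_char_pow (x ^ q) x (e * i)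
      rw [h1, ← pow_mul, ← pow_succ']
    rw [Finset.sum_congr rfl fun i _ => step i, Finset.sum_range_sub (fun i => x ^ q ^ i)]
    have : x ^ q ^ n = x := by rw [← hL]; exact FiniteField.pow_card x
    simp [this]
  have hcount : q ^ n = Nat.card φ.range * Nat.card φ.ker := by
    rw [← hL, ← Nat.card_eq_fintype_card]
    exact stmt7_hom_count φ
  have hkK : Nat.card φ.ker = K.ncard := by
    rw [← hker, ← Nat.card_coe_set_eq]; rfl
  have hrT : Nat.card φ.range ≤ T0.ncard := by
    rw [← Nat.card_coe_set_eq]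
    exact Set.ncard_le_ncard hrange (Set.toFinite _)
  have hsplit : q ^ n = q ^ (n - 1) * q := by
    rw [← pow_succ]; congr 1; omega
  have hKn : K.ncard = q := by
    have h1 : q ^ (n - 1) * q ≤ q ^ (n - 1) * K.ncard := by
      calc q ^ (n - 1) * q = Nat.card φ.range * K.ncard := by rw [← hsplit, hcount, hkK]
        _ ≤ q ^ (n - 1) * K.ncard := Nat.mul_le_mul_right _ (hrT.trans hT0le)
    exact le_antisymm hKle (Nat.le_of_mul_le_mul_left h1 (Nat.pow_pos hq0))
  have hrn : q ^ (n - 1) ≤ Nat.card φ.range := by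
    have h1 : Nat.card φ.range * q = q ^ (n - 1) * q := by
      rw [← hsplit, hcount, hkK, hKn]
    exact le_of_eq (Nat.eq_of_mul_eq_mul_right hq0 h1).symm
  exact ⟨hKn, le_antisymm hT0le (hrn.trans hrT)⟩

/-- A q-polynomial `f(x) = Σ_{i<n} a_i x^{q^i}` over `F_{q^n}` has kernel of
`F_q`-dimension exactly `n-1` (i.e. `q^{n-1}` roots) iff there are `α, β ∈ F_{q^n}^*`
with `f(x) = α · Tr_{q^n/q}(βx)`, i.e. `a_i = α β^{q^i}` for all `i < n`. -/
theorem stmt7 (q n : ℕ) (hq : IsPrimePow q) (hn : 0 < n)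
    (L : Type*) [Field L] [Fintype L] (hL : Fintype.card L = q ^ n)
    (a : ℕ → L) :
    Set.ncard {x : L | ∑ i ∈ Finset.range n, a i * x ^ q ^ i = 0} = q ^ (n - 1)
      ↔ ∃ α β : L, α ≠ 0 ∧ β ≠ 0 ∧ ∀ i < n, a i = α * β ^ q ^ i := by
  classical
  obtain ⟨p, e, hpp, he, rfl⟩ := hq
  have hpn : Nat.Prime p := Nat.prime_iff.mpr hpp
  haveI : Fact p.Prime := ⟨hpn⟩
  set q := p ^ e with hqdef
  have hq1 : 1 < q := Nat.one_lt_pow he.ne' hpn.one_lt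
  have hq0 : 0 < q := lt_trans one_pos hq1
  -- characteristic of L is p
  haveI : CharP L (ringChar L) := ringChar.charP L
  have hcharp : ringChar L = p := by
    obtain ⟨m, hrp, hcard⟩ := FiniteField.card L (ringChar L)
    have h1 : (ringChar L) ^ (m : ℕ) = p ^ (e * n) := by
      rw [← hcard, hL, hqdef, ← pow_mul]
    have h2 : p ∣ (ringChar L) ^ (m : ℕ) := by
      rw [h1]
      exact dvd_pow_self p (by positivity)
    exact ((Nat.prime_dvd_prime_iff_eq hpn hrp).mp (hpn.dvd_of_dvd_pow h2)).symm
  haveI hcharL : CharP L p := hcharp ▸ ringChar.charP L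
  obtain ⟨hKcard, hT0card⟩ := stmt7_aux_count p e n he hn L hL
  set K : Set L := {c : L | c ^ q = c} with hK
  set T0 : Set L := {y : L | ∑ i ∈ Finset.range n, y ^ q ^ i = 0} with hT0
  constructor
  · -- forward direction
    intro hScard
    set f : L →+ L := stmt7_qpolyHom p e n a with hf
    have hkerS : (f.ker : Set L) = {x : L | ∑ i ∈ Finset.range n, a i * x ^ q ^ i = 0} := by
      ext x
      simp only [SetLike.mem_coe, AddMonoidHom.mem_ker, hf, stmt7_qpolyHom_apply,
        Set.mem_setOf_eq]
      exact Iff.rfl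
    have hkerCard : Nat.card f.ker = q ^ (n - 1) := by
      have : Nat.card f.ker = Set.ncard (f.ker : Set L) := by
        rw [← Nat.card_coe_set_eq]; rfl
      rw [this, hkerS, hScard]
    have hrangeCard : Nat.card f.range = q := by
      have hcount : q ^ n = Nat.card f.range * Nat.card f.ker := by
        rw [← hL, ← Nat.card_eq_fintype_card]; exact stmt7_hom_count f
      rw [hkerCard] at hcount
      have hsplit : q ^ n = q * q ^ (n - 1) := by
        rw [← pow_succ']; congr 1; omega
      rw [hsplit] at hcount
      exact (Nat.eq_of_mul_eq_mul_right (Nat.pow_pos hq0) hcount.symm)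
    -- find a nonzero element α in the range
    have hrancard' : Set.ncard (f.range : Set L) = q := by
      rw [← Nat.card_coe_set_eq, ← hrangeCard]; rfl
    obtain ⟨α, hαmem, hα⟩ : ∃ α ∈ (f.range : Set L), α ≠ 0 := by
      by_contra hcon
      push_neg at hcon
      have hsub : (f.range : Set L) ⊆ {0} := fun x hx => hcon x hx
      have := Set.ncard_le_ncard hsub (Set.finite_singleton 0)
      rw [hrancard', Set.ncard_singleton] at this
      omega
    obtain ⟨x₀, hx₀⟩ := hαmem
    -- the range equals K • α
    have hKαsub : (fun c => c * α) '' K ⊆ (f.range : Set L) := by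
      rintro - ⟨c, hc, rfl⟩
      refine ⟨c * x₀, ?_⟩
      have hcq : ∀ i : ℕ, c ^ q ^ i = c := stmt7_pow_fixed hc
      calc f (c * x₀) = ∑ i ∈ Finset.range n, a i * (c * x₀) ^ q ^ i := rfl
        _ = ∑ i ∈ Finset.range n, c * (a i * x₀ ^ q ^ i) := by
            apply Finset.sum_congr rfl
            intro i _
            rw [mul_pow, hcq i]; ring
        _ = c * f x₀ := by rw [← Finset.mul_sum]; rfl
        _ = c * α := by rw [hx₀]
    have hKαcard : ((fun c => c * α) '' K).ncard = q := by
      rw [Set.ncard_image_of_injective K (mul_left_injective₀ hα), hKcard]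
    have hranKα : (f.range : Set L) = (fun c => c * α) '' K :=
      (Set.eq_of_subset_of_ncard_le hKαsub (by rw [hrancard', hKαcard]) (Set.toFinite _)).symm
    -- key identity : (f x)^q * α = f x * α^q
    have hkey : ∀ x : L, (f x) ^ q * α = f x * α ^ q := by
      intro x
      have hmem : f x ∈ (fun c => c * α) '' K := by
        rw [← hranKα]; exact ⟨x, rfl⟩
      obtain ⟨c, hc, hcx⟩ := hmem
      rw [← hcx, mul_pow, hc]
      ring
    -- expand (f x)^q as a q-polynomial with coefficients b
    obtain ⟨m, rfl⟩ : ∃ m, n = m + 1 := ⟨n - 1, by omega⟩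
    set b : ℕ → L := fun i => match i with
      | 0 => a m ^ q
      | (i + 1) => a i ^ q with hb
    have hexp : ∀ x : L, (f x) ^ q = ∑ i ∈ Finset.range (m + 1), b i * x ^ q ^ i := by
      intro x
      have h1 : (f x) ^ q = ∑ i ∈ Finset.range (m + 1), a i ^ q * x ^ q ^ (i + 1) := by
        have : (f x) ^ q = iterateFrobenius L p e (f x) := by
          rw [iterateFrobenius_def]
        rw [this]
        show iterateFrobenius L p e (∑ i ∈ Finset.range (m + 1), a i * x ^ q ^ i) = _
        rw [map_sum]
        apply Finset.sum_congr rfl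
        intro i _
        rw [map_mul, map_pow, iterateFrobenius_def, iterateFrobenius_def]
        rw [← pow_mul]
        have hexp2 : p ^ e * q ^ i = q ^ (i + 1) := by rw [hqdef, pow_succ, mul_comm]
        rw [hexp2]
      rw [h1, Finset.sum_range_succ, Finset.sum_range_succ']
      have hxn : x ^ q ^ (m + 1) = x := by rw [← hL]; exact FiniteField.pow_card x
      simp only [hb, hxn, pow_zero, pow_one]
    -- coefficient identities
    have heqs : ∀ i < m + 1, a i * α ^ q = b i * α := by
      have hvanish : ∀ x : L,
          ∑ i ∈ Finset.range (m + 1), (a i * α ^ q - b i * α) * x ^ q ^ i = 0 := by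
        intro x
        have e1 : ∑ i ∈ Finset.range (m + 1), (a i * α ^ q) * x ^ q ^ i = f x * α ^ q := by
          show _ = (∑ i ∈ Finset.range (m + 1), a i * x ^ q ^ i) * α ^ q
          rw [Finset.sum_mul]
          apply Finset.sum_congr rfl
          intro i _; ring
        have e2 : ∑ i ∈ Finset.range (m + 1), (b i * α) * x ^ q ^ i = (f x) ^ q * α := by
          rw [hexp x, Finset.sum_mul]
          apply Finset.sum_congr rfl
          intro i _; ring
        calc ∑ i ∈ Finset.range (m + 1), (a i * α ^ q - b i * α) * x ^ q ^ i
            = ∑ i ∈ Finset.range (m + 1), ((a i * α ^ q) * x ^ q ^ i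
                - (b i * α) * x ^ q ^ i) := by
              apply Finset.sum_congr rfl; intro i _; ring
          _ = f x * α ^ q - (f x) ^ q * α := by rw [Finset.sum_sub_distrib, e1, e2]
          _ = 0 := by rw [← hkey x]; ring
      intro i hi
      have := stmt7_qpoly_coeff_zero hq1 hL hn _ hvanish i hi
      exact sub_eq_zero.mp this
    set β : L := α⁻¹ * a 0 with hβdef
    have claim : ∀ i, i < m + 1 → a i = α * β ^ q ^ i := by
      intro i
      induction i with
      | zero =>
        intro _
        simp only [pow_zero, pow_one, hβdef]
        field_simp
      | succ i ih =>
        intro hi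
        have hi' : i < m + 1 := by omega
        have heq := heqs (i + 1) hi
        have hbi : b (i + 1) = a i ^ q := rfl
        rw [hbi, ih hi'] at heq
        have hαq : α ^ q ≠ 0 := pow_ne_zero _ hα
        have hr : (α * β ^ q ^ i) ^ q * α = (α * β ^ q ^ (i + 1)) * α ^ q := by
          rw [mul_pow, ← pow_mul, ← pow_succ]
          ring
        rw [hr] at heq
        exact mul_right_cancel₀ hαq heq
    refine ⟨α, β, hα, ?_, claim⟩
    intro hβ0
    have hzero : ∀ i < m + 1, a i = 0 := by
      intro i hi
      rw [claim i hi, hβ0, zero_pow (Nat.pow_pos hq0).ne', mul_zero]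
    have huniv : {x : L | ∑ i ∈ Finset.range (m + 1), a i * x ^ q ^ i = 0} = Set.univ := by
      ext x
      simp only [Set.mem_setOf_eq, Set.mem_univ, iff_true]
      apply Finset.sum_eq_zero
      intro i hi
      rw [hzero i (Finset.mem_range.mp hi), zero_mul]
    rw [huniv, Set.ncard_univ, Nat.card_eq_fintype_card, hL] at hScard
    have hlt : q ^ (m + 1 - 1) < q ^ (m + 1) := Nat.pow_lt_pow_right hq1 (by omega)
    omega
  · -- reverse direction
    rintro ⟨α, β, hα, hβ, hab⟩
    have hSeq : {x : L | ∑ i ∈ Finset.range n, a i * x ^ q ^ i = 0}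
        = (fun y => β⁻¹ * y) '' T0 := by
      ext x
      have hsum : ∑ i ∈ Finset.range n, a i * x ^ q ^ i
          = α * ∑ i ∈ Finset.range n, (β * x) ^ q ^ i := by
        rw [Finset.mul_sum]
        apply Finset.sum_congr rfl
        intro i hi
        rw [hab i (Finset.mem_range.mp hi), mul_pow]
        ring
      constructor
      · intro hx
        refine ⟨β * x, ?_, by field_simp⟩
        simp only [hT0, Set.mem_setOf_eq]
        have := hx
        simp only [Set.mem_setOf_eq, hsum, mul_eq_zero] at this
        tauto
      · rintro ⟨y, hy, rfl⟩
        simp only [hT0, Set.mem_setOf_eq] at hy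
        simp only [Set.mem_setOf_eq, hsum]
        have : β * (β⁻¹ * y) = y := by field_simp
        rw [this, hy, mul_zero]
    rw [hSeq, Set.ncard_image_of_injective T0 (mul_right_injective₀ (inv_ne_zero hβ))]
    exact hT0card
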